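/- For every real constant q > 1 there is a constant C such that for every n, the probability that the random 2-letter automaton (a,b) with n states has a nonempty closed set M ⊆ Fin n with |M| < n/(q·e²) is at most C/n. -/

import Mathlib

/-- Probability of the event `P` under the uniform measure on a finite type. -/
noncomputable def probOf (T : Type) [Fintype T] (P : T → Prop) : ℝ :=
  (Nat.card {x : T // P x} : ℝ) / (Nat.card T : ℝ)

/-- The two letters of a random 2-letter automaton acting on `Fin n`. -/
def delta2 {n : ℕ} (f : (Fin n → Fin n) × (Fin n → Fin n)) : Bool → Fin n → Fin n :=
  fun x => if x then f.1 else f.2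

/-- A set of states is closed if it is stable under the action of every letter. -/
def ClosedSet {Q A : Type*} (δ : A → Q → Q) (M : Finset Q) : Prop :=
  ∀ q ∈ M, ∀ x : A, δ x q ∈ M

open Finset

/-- number of self-maps stabilizing `M` -/
lemma aux_stab_card (n : ℕ) (M : Finset (Fin n)) :
    Fintype.card {f : Fin n → Fin n // ∀ i ∈ M, f i ∈ M}
      = M.card ^ M.card * n ^ (n - M.card) := by
  classical
  let e : {f : Fin n → Fin n // ∀ i ∈ M, f i ∈ M} ≃ (∀ i : Fin n, {x : Fin n // i ∈ M → x ∈ M}) :=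
  { toFun := fun f i => ⟨f.1 i, fun h => f.2 i h⟩
    invFun := fun g => ⟨fun i => (g i).1, fun i h => (g i).2 h⟩
    left_inv := fun f => rfl
    right_inv := fun g => rfl }
  rw [Fintype.card_congr e, Fintype.card_pi]
  have h1 : ∀ i : Fin n, Fintype.card {x : Fin n // i ∈ M → x ∈ M} = if i ∈ M then M.card else n := by
    intro i
    by_cases h : i ∈ M
    · simp [Fintype.card_subtype, h]
    · simp [Fintype.card_subtype, h]
  simp_rw [h1]
  rw [Finset.prod_ite, Finset.prod_const, Finset.prod_const]
  congr 1
  · congr 1; simp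
  · congr 1
    have : filter (fun x => x ∉ M) univ = Mᶜ := by ext x; simp
    rw [this, Finset.card_compl, Fintype.card_fin]

lemma aux_closed_card (n : ℕ) (M : Finset (Fin n)) :
    Nat.card {f : (Fin n → Fin n) × (Fin n → Fin n) // ClosedSet (delta2 f) M}
      = (M.card ^ M.card * n ^ (n - M.card)) ^ 2 := by
  classical
  rw [Nat.card_eq_fintype_card, Fintype.card_subtype]
  have key : ∀ f : (Fin n → Fin n) × (Fin n → Fin n),
      ClosedSet (delta2 f) M ↔ ((∀ i ∈ M, f.1 i ∈ M) ∧ (∀ i ∈ M, f.2 i ∈ M)) := by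
    intro f
    constructor
    · intro h
      exact ⟨fun i hi => h i hi true, fun i hi => h i hi false⟩
    · rintro ⟨h1, h2⟩ q hq x
      cases x
      · exact h2 q hq
      · exact h1 q hq
  have hsplit : ((univ : Finset ((Fin n → Fin n) × (Fin n → Fin n))).filter
        (fun f => ClosedSet (delta2 f) M))
      = ((univ : Finset (Fin n → Fin n)).filter (fun a => ∀ i ∈ M, a i ∈ M)) ×ˢ
        ((univ : Finset (Fin n → Fin n)).filter (fun a => ∀ i ∈ M, a i ∈ M)) := by
    ext f
    simp [key f, Finset.mem_product]
  have hstab : ((univ : Finset (Fin n → Fin n)).filter (fun a => ∀ i ∈ M, a i ∈ M)).card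
      = M.card ^ M.card * n ^ (n - M.card) := by
    rw [← Fintype.card_subtype, aux_stab_card]
  rw [hsplit, Finset.card_product, hstab, sq]

/-- the per-size real estimate -/
lemma aux_term_bound (q : ℝ) (hq : 1 < q) (n m : ℕ) (hm : 1 ≤ m)
    (hsize : (m : ℝ) < (n : ℝ) / (q * Real.exp 1 ^ 2)) :
    (n.choose m : ℝ) * (((m : ℝ) ^ m * (n : ℝ) ^ (n - m)) ^ 2)
      ≤ ((n : ℝ) ^ n) ^ 2 * (Real.exp 1 / ((n : ℝ) * (1 / (q * Real.exp 1))))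
          * (2 * (1 / (q * Real.exp 1))) ^ m := by
  have hE1 : (2 : ℝ) < Real.exp 1 := by
    have := Real.exp_one_gt_d9; linarith
  have hE0 : (0 : ℝ) < Real.exp 1 := by linarith
  set E : ℝ := Real.exp 1 with hEdef
  set r : ℝ := 1 / (q * E) with hrdef
  have hqE : (2 : ℝ) < q * E := by nlinarith
  have hr0 : 0 < r := by positivity
  have hqE2 : (1 : ℝ) < q * E ^ 2 := by nlinarith
  -- n ≥ 1
  have hn0 : (0 : ℝ) < (n : ℝ) := by
    by_contra h
    push_neg at h
    have : (n : ℝ) / (q * E ^ 2) ≤ 0 := div_nonpos_of_nonpos_of_nonneg h (by positivity)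
    have : (m : ℝ) < 0 := lt_of_lt_of_le hsize this
    exact absurd this (not_lt.2 (by positivity))
  have hmn : m ≤ n := by
    have h1 : (n : ℝ) / (q * E ^ 2) ≤ (n : ℝ) := by
      rw [div_le_iff₀ (by positivity)]
      nlinarith
    have : (m : ℝ) < (n : ℝ) := lt_of_lt_of_le hsize h1
    exact_mod_cast this.le
  set x : ℝ := (m : ℝ) with hxdef
  set nn : ℝ := (n : ℝ) with hnndef
  have hnn0 : nn ≠ 0 := ne_of_gt hn0
  have hx0 : (0 : ℝ) ≤ x := by positivity
  have hfac0 : (0 : ℝ) < (m.factorial : ℝ) := by exact_mod_cast m.factorial_pos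
  have hsplitpow : nn ^ (n - m) = nn ^ n / nn ^ m := by
    rw [eq_div_iff (pow_ne_zero _ hnn0), pow_sub_mul_pow nn hmn]
  have hA : E * x / nn ≤ r := by
    rw [hrdef, div_le_div_iff₀ hn0 (by positivity)]
    have := (mul_lt_mul_iff_right₀ hE0).2 hsize
    calc E * x * (q * E) = (E * (nn / (q * E ^ 2))) * (q * E) - (E * (nn / (q * E^2)) - E * x) * (q*E) := by ring
      _ ≤ (E * (nn / (q * E ^ 2))) * (q * E) := by
          have h2 : E * x ≤ E * (nn / (q * E ^ 2)) := by nlinarith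
          nlinarith
      _ = 1 * nn := by field_simp
  have hA0 : 0 ≤ E * x / nn := by positivity
  have hchoose : (n.choose m : ℝ) ≤ nn ^ m / (m.factorial : ℝ) :=
    Nat.choose_le_pow_div m n
  have hxm : x ^ m / (m.factorial : ℝ) ≤ E ^ m := by
    have h1 := Real.pow_div_factorial_le_exp x hx0 m
    have h2 : Real.exp x = E ^ m := by rw [hxdef, hEdef, ← Real.exp_nat_mul, mul_one]
    rwa [h2] at h1
  -- main chain
  have hmain : (n.choose m : ℝ) * ((x ^ m * nn ^ (n - m)) ^ 2)
      ≤ (nn ^ n) ^ 2 * (E * x / nn) ^ m := by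
    calc (n.choose m : ℝ) * ((x ^ m * nn ^ (n - m)) ^ 2)
        ≤ (nn ^ m / (m.factorial : ℝ)) * ((x ^ m * nn ^ (n - m)) ^ 2) :=
          mul_le_mul_of_nonneg_right hchoose (sq_nonneg _)
      _ = (nn ^ n) ^ 2 * ((x ^ m / (m.factorial : ℝ)) * (x ^ m / nn ^ m)) := by
          rw [hsplitpow]; field_simp
      _ ≤ (nn ^ n) ^ 2 * (E ^ m * (x / nn) ^ m) := by
          apply mul_le_mul_of_nonneg_left _ (by positivity)
          apply mul_le_mul hxm (by rw [div_pow]) (by positivity) (by positivity)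
      _ = (nn ^ n) ^ 2 * (E * x / nn) ^ m := by
          rw [← mul_pow]; ring_nf
  refine hmain.trans ?_
  rw [mul_assoc]
  apply mul_le_mul_of_nonneg_left _ (by positivity)
  -- (E x / nn)^m ≤ (E/(nn r)) (2r)^m
  have hstep1 : (E * x / nn) ^ m ≤ (E * x / nn) * r ^ (m - 1) := by
    have : (E * x / nn) ^ m = (E * x / nn) * (E * x / nn) ^ (m - 1) := by
      conv_lhs => rw [show m = 1 + (m - 1) by omega, pow_add, pow_one]
    rw [this]
    exact mul_le_mul_of_nonneg_left (pow_le_pow_left₀ hA0 hA _) hA0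
  refine hstep1.trans ?_
  have hx2 : x ≤ 2 ^ m := by
    have h := (Nat.lt_two_pow_self (n := m)).le
    rw [hxdef]
    exact_mod_cast h
  have hstep2 : (E * x / nn) * r ^ (m - 1) ≤ (E * 2 ^ m / nn) * r ^ (m - 1) := by
    apply mul_le_mul_of_nonneg_right _ (by positivity)
    rw [div_le_div_iff_of_pos_right hn0]
    nlinarith
  refine hstep2.trans (le_of_eq ?_)
  have hrm : r ^ m = r ^ (m - 1) * r := by
    rw [← pow_succ]; congr 1; omega
  rw [mul_pow, hrm]
  field_simp

theorem stmt12 (q : ℝ) (hq : 1 < q) :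
    ∃ C : ℝ, ∀ n : ℕ,
      probOf ((Fin n → Fin n) × (Fin n → Fin n))
          (fun f => ∃ M : Finset (Fin n), M.Nonempty ∧ ClosedSet (delta2 f) M ∧
            (M.card : ℝ) < (n : ℝ) / (q * Real.exp 1 ^ 2))
        ≤ C / n := by
  classical
  have hE1 : (2 : ℝ) < Real.exp 1 := by have := Real.exp_one_gt_d9; linarith
  have hE0 : (0 : ℝ) < Real.exp 1 := by linarith
  set E : ℝ := Real.exp 1 with hEdef
  set r : ℝ := 1 / (q * E) with hrdef
  have hqE : (2 : ℝ) < q * E := by nlinarith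
  have hr0 : 0 < r := by rw [hrdef]; positivity
  have h2r : 2 * r < 1 := by
    rw [hrdef, mul_one_div, div_lt_one (by positivity)]; exact hqE
  refine ⟨E / (r * (1 - 2 * r)), fun n => ?_⟩
  rcases Nat.eq_zero_or_pos n with rfl | hn
  · -- n = 0 : the event is impossible
    rw [probOf]
    have h0 : Nat.card {x : (Fin 0 → Fin 0) × (Fin 0 → Fin 0) //
        ∃ M : Finset (Fin 0), M.Nonempty ∧ ClosedSet (delta2 x) M ∧
          (M.card : ℝ) < ((0 : ℕ) : ℝ) / (q * E ^ 2)} = 0 := by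
      rw [Nat.card_eq_zero]
      left
      constructor
      rintro ⟨f, M, hM, -, -⟩
      exact (hM.choose).elim0
    rw [h0]
    simp
  · have hn0 : (0 : ℝ) < (n : ℝ) := by exact_mod_cast hn
    set P : ((Fin n → Fin n) × (Fin n → Fin n)) → Prop :=
      fun f => ∃ M : Finset (Fin n), M.Nonempty ∧ ClosedSet (delta2 f) M ∧
        (M.card : ℝ) < (n : ℝ) / (q * E ^ 2) with hPdef
    set S : Finset (Finset (Fin n)) :=
      univ.filter (fun M => M.Nonempty ∧ (M.card : ℝ) < (n : ℝ) / (q * E ^ 2)) with hSdef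
    -- denominator
    have hcardT : (Nat.card ((Fin n → Fin n) × (Fin n → Fin n)) : ℝ) = ((n : ℝ) ^ n) ^ 2 := by
      have : Nat.card ((Fin n → Fin n) × (Fin n → Fin n)) = n ^ n * n ^ n := by
        simp [Nat.card_eq_fintype_card]
      rw [this]; push_cast; ring
    -- numerator as a filter card
    have hnum : Nat.card {f : (Fin n → Fin n) × (Fin n → Fin n) // P f}
        = (univ.filter P).card := by
      rw [Nat.card_eq_fintype_card, Fintype.card_subtype]
    -- union bound
    have hsub : univ.filter P ⊆
        S.biUnion (fun M => univ.filter (fun f => ClosedSet (delta2 f) M)) := by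
      intro f hf
      rw [mem_filter] at hf
      obtain ⟨-, M, h1, h2, h3⟩ := hf
      rw [mem_biUnion]
      exact ⟨M, by simp [hSdef, h1, h3], by simp [h2]⟩
    have hN : (univ.filter P).card ≤ ∑ M ∈ S, (M.card ^ M.card * n ^ (n - M.card)) ^ 2 := by
      refine (Finset.card_le_card hsub).trans ((Finset.card_biUnion_le).trans
        (Finset.sum_le_sum fun M _ => le_of_eq ?_))
      rw [← Fintype.card_subtype, ← Nat.card_eq_fintype_card, aux_closed_card]
    -- real-valued bound on the sum
    set g : ℕ → ℝ := fun m => ((m : ℝ) ^ m * (n : ℝ) ^ (n - m)) ^ 2 with hgdef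
    set u : ℕ → ℝ := fun j => ((n : ℝ) ^ n) ^ 2 * (E / ((n : ℝ) * r)) * (2 * r) ^ j with hudef
    have hNreal : ((univ.filter P).card : ℝ) ≤ ∑ M ∈ S, g M.card := by
      calc ((univ.filter P).card : ℝ)
          ≤ ((∑ M ∈ S, (M.card ^ M.card * n ^ (n - M.card)) ^ 2 : ℕ) : ℝ) := by
            exact_mod_cast hN
        _ = ∑ M ∈ S, g M.card := by push_cast [hgdef]; rfl
    have hfib : ∑ M ∈ S, g M.card
        = ∑ j ∈ Finset.range (n + 1), ∑ M ∈ S.filter (fun M => M.card = j), g M.card := by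
      refine (Finset.sum_fiberwise_of_maps_to (fun M _ => Finset.mem_range.2 ?_) _).symm
      exact Nat.lt_succ_of_le (le_trans (Finset.card_le_univ M) (by simp))
    have hinner : ∀ j ∈ Finset.range (n + 1),
        ∑ M ∈ S.filter (fun M => M.card = j), g M.card ≤ u j := by
      intro j _
      have hconst : ∑ M ∈ S.filter (fun M => M.card = j), g M.card
          = ((S.filter (fun M => M.card = j)).card : ℝ) * g j := by
        rw [Finset.sum_congr rfl (fun M hM => by rw [(Finset.mem_filter.1 hM).2]),
          Finset.sum_const, nsmul_eq_mul]
      rw [hconst]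
      by_cases hne : (S.filter (fun M => M.card = j)).Nonempty
      · obtain ⟨M, hM⟩ := hne
        rw [Finset.mem_filter] at hM
        obtain ⟨hMS, hMcard⟩ := hM
        rw [hSdef, Finset.mem_filter] at hMS
        obtain ⟨-, hMne, hMsize⟩ := hMS
        have hj1 : 1 ≤ j := hMcard ▸ Finset.card_pos.2 hMne
        have hjsize : (j : ℝ) < (n : ℝ) / (q * E ^ 2) := hMcard ▸ hMsize
        have hfibcard : (S.filter (fun M => M.card = j)).card ≤ n.choose j := by
          have hss : S.filter (fun M => M.card = j) ⊆ Finset.powersetCard j univ := by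
            intro M' hM'
            rw [Finset.mem_powersetCard]
            exact ⟨Finset.subset_univ _, (Finset.mem_filter.1 hM').2⟩
          refine (Finset.card_le_card hss).trans (le_of_eq ?_)
          rw [Finset.card_powersetCard]; simp
        have hg0 : 0 ≤ g j := sq_nonneg _
        calc ((S.filter (fun M => M.card = j)).card : ℝ) * g j
            ≤ (n.choose j : ℝ) * g j := by
              apply mul_le_mul_of_nonneg_right _ hg0
              exact_mod_cast hfibcard
          _ ≤ u j := by
              have := aux_term_bound q hq n j hj1 hjsize
              rw [hudef, hgdef, hrdef]
              exact this
      · rw [Finset.not_nonempty_iff_eq_empty] at hne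
        rw [hne]
        simp only [Finset.card_empty, Nat.cast_zero, zero_mul]
        rw [hudef]
        positivity
    have hgeom : ∑ j ∈ Finset.range (n + 1), (2 * r) ^ j ≤ (1 - 2 * r)⁻¹ := by
      refine le_trans (Summable.sum_le_tsum (L := SummationFilter.unconditional ℕ) (f := fun j : ℕ => (2 * r) ^ j) _ (fun i _ => by positivity) ?_) ?_
      · exact summable_geometric_of_lt_one (by positivity) h2r
      · rw [tsum_geometric_of_lt_one (by positivity) h2r]
    have htotal : ∑ M ∈ S, g M.card
        ≤ ((n : ℝ) ^ n) ^ 2 * (E / ((n : ℝ) * r)) * (1 - 2 * r)⁻¹ := by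
      rw [hfib]
      calc ∑ j ∈ Finset.range (n + 1), ∑ M ∈ S.filter (fun M => M.card = j), g M.card
          ≤ ∑ j ∈ Finset.range (n + 1), u j := Finset.sum_le_sum hinner
        _ = ((n : ℝ) ^ n) ^ 2 * (E / ((n : ℝ) * r))
            * ∑ j ∈ Finset.range (n + 1), (2 * r) ^ j := by
            rw [hudef, Finset.mul_sum]
        _ ≤ ((n : ℝ) ^ n) ^ 2 * (E / ((n : ℝ) * r)) * (1 - 2 * r)⁻¹ := by
            apply mul_le_mul_of_nonneg_left hgeom (by positivity)
    -- put everything together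
    have h12 : (0:ℝ) < 1 - 2 * r := by linarith
    clear hinner hgeom hfib hudef u
    clear_value r
    rw [probOf, hnum, hcardT]
    rw [div_le_div_iff₀ (by positivity) hn0]
    calc ((univ.filter P).card : ℝ) * (n : ℝ)
        ≤ (((n : ℝ) ^ n) ^ 2 * (E / ((n : ℝ) * r)) * (1 - 2 * r)⁻¹) * (n : ℝ) := by
          apply mul_le_mul_of_nonneg_right (hNreal.trans htotal) hn0.le
      _ = E / (r * (1 - 2 * r)) * ((n : ℝ) ^ n) ^ 2 := by
          field_simp
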